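/- arXiv:1905.05897 — 3 statements merged into one kernel-verified Lean document; each statement's English description precedes it below -/
import Mathlib

section
/- Let V be a finite-dimensional real inner product space, let L be a finite set of labels with |L| ≥ 2, let p_1, ..., p_k ∈ V be points (the poison feature vectors), let t ∈ V (the target feature vector), and fix a label ℓ_p ∈ L. Then the following two statements are equivalent: (1) every linear classifier (w, b) that classifies each p_j into label ℓ_p also classifies t into label ℓ_p; (2) t is a convex combination of p_1, ..., p_k, i.e., there exist c_1, ..., c_k ≥ 0 with c_1 + ... + c_k = 1 such that t = c_1 p_1 + ... + c_k p_k (equivalently, t lies in the convex hull of {p_1, ..., p_k}). -/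
open RealInnerProductSpace

/-- **Proposition 1 (full equivalence).** For a finite-dimensional real inner product
space `V`, a finite label set `L` with at least two labels, poison feature vectors
`p 1, …, p k`, a target `t`, and a fixed label `ℓp`: every linear classifier `(w, b)`
that classifies all the poisons into `ℓp` also classifies `t` into `ℓp` if and only if
`t` is a convex combination of the poisons. -/
theorem convex_polytope_iff_every_classifier
    {V : Type*} [NormedAddCommGroup V] [InnerProductSpace ℝ V] [FiniteDimensional ℝ V]
    {L : Type*} [Fintype L] (hL : 2 ≤ Fintype.card L)
    {k : ℕ} (p : Fin k → V) (t : V) (ℓp : L) :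
    (∀ (w : L → V) (b : L → ℝ),
        (∀ j : Fin k, ∀ i : L, i ≠ ℓp → ⟪w ℓp, p j⟫ + b ℓp > ⟪w i, p j⟫ + b i) →
        (∀ i : L, i ≠ ℓp → ⟪w ℓp, t⟫ + b ℓp > ⟪w i, t⟫ + b i)) ↔
    (∃ c : Fin k → ℝ, (∀ j, 0 ≤ c j) ∧ (∑ j, c j) = 1 ∧ t = ∑ j, c j • p j) := by
  classical
  obtain ⟨i₀, hi₀⟩ : ∃ i : L, i ≠ ℓp := by
    by_contra h
    push_neg at h
    have : Fintype.card L ≤ 1 := Fintype.card_le_one_iff.2 (by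
      intro a b; rw [h a, h b])
    omega
  constructor
  · intro H
    by_contra hc
    -- `t` is not in the convex hull of the range of `p`
    have hth : t ∉ convexHull ℝ (Set.range p) := by
      intro ht
      rw [convexHull_range_eq_exists_affineCombination] at ht
      obtain ⟨s, w, hw₀, hw₁, hw₂⟩ := ht
      refine hc ⟨fun j => if j ∈ s then w j else 0,
        fun j => by dsimp only; split; exacts [hw₀ _ ‹_›, le_rfl], ?_, ?_⟩
      · rw [Finset.sum_ite_mem, Finset.univ_inter, hw₁]
      · rw [← hw₂, s.affineCombination_eq_linear_combination _ _ hw₁]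
        simp only [ite_smul, zero_smul]
        rw [Finset.sum_ite_mem, Finset.univ_inter]
    obtain ⟨f, u, hfu, hfs⟩ := geometric_hahn_banach_point_closed
      (convex_convexHull ℝ _) ((Set.finite_range p).isClosed_convexHull ℝ) hth
    set v : V := (InnerProductSpace.toDual ℝ V).symm f with hv
    have hvf : ∀ x : V, ⟪v, x⟫ = f x := fun x => InnerProductSpace.toDual_symm_apply
    -- build a classifier separating t
    have := H (fun i => if i = ℓp then v else 0) (fun i => if i = ℓp then -u else 0)
      (by
        intro j i hi
        simp only [if_pos rfl, if_neg hi, if_true, eq_self_iff_true, hvf, inner_zero_left]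
        have : u < f (p j) := hfs _ (subset_convexHull ℝ _ (Set.mem_range_self j))
        linarith) i₀ hi₀
    simp only [if_pos rfl, if_neg hi₀, if_true, eq_self_iff_true, hvf, inner_zero_left] at this
    linarith
  · rintro ⟨c, hc₀, hc₁, rfl⟩ w b hp i hi
    have key : ∀ a : L, ⟪w a, ∑ j, c j • p j⟫ + b a
        = ∑ j, c j * (⟪w a, p j⟫ + b a) := by
      intro a
      rw [inner_sum]
      simp_rw [mul_add, Finset.sum_add_distrib, ← Finset.sum_mul, hc₁, one_mul,
        real_inner_smul_right]
    rw [key, key]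
    -- some coefficient is positive
    obtain ⟨j₀, hj₀⟩ : ∃ j, 0 < c j := by
      by_contra h
      push_neg at h
      have : ∑ j, c j = 0 := Finset.sum_eq_zero fun j _ => le_antisymm (h j) (hc₀ j)
      rw [hc₁] at this; norm_num at this
    refine Finset.sum_lt_sum (fun j _ => ?_) ⟨j₀, Finset.mem_univ _, ?_⟩
    · exact mul_le_mul_of_nonneg_left (hp j i hi).le (hc₀ j)
    · exact mul_lt_mul_of_pos_left (hp j₀ i hi) hj₀
end

section
/- Let V be a finite-dimensional real inner product space, let L be a finite set of labels with |L| ≥ 2, let p_1, ..., p_k ∈ V, fix a label ℓ_p ∈ L, and suppose t ∈ V does NOT lie in the convex hull of {p_1, ..., p_k}. Then there exists a linear classifier (w, b) over L that classifies each p_j into label ℓ_p but does not classify t into label ℓ_p. -/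
open RealInnerProductSpace

/-- **Proposition 1, direction (1 ⟹ 2), contrapositive.** If the target `t` does not lie
in the convex hull of the poison feature vectors `p 1, …, p k`, and there are at least two
labels, then there exists a linear classifier `(w, b)` that classifies each poison into
the label `ℓp` but does not classify `t` into `ℓp`. -/
theorem exists_classifier_separating_of_not_mem_convexHull
    {V : Type*} [NormedAddCommGroup V] [InnerProductSpace ℝ V] [FiniteDimensional ℝ V]
    {L : Type*} [Fintype L] (hL : 2 ≤ Fintype.card L)
    {k : ℕ} (p : Fin k → V) (t : V) (ℓp : L)
    (ht : t ∉ convexHull ℝ (Set.range p)) :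
    ∃ (w : L → V) (b : L → ℝ),
      (∀ j : Fin k, ∀ i : L, i ≠ ℓp → ⟪w ℓp, p j⟫ + b ℓp > ⟪w i, p j⟫ + b i) ∧
      ¬ (∀ i : L, i ≠ ℓp → ⟪w ℓp, t⟫ + b ℓp > ⟪w i, t⟫ + b i) := by
  have hclosed : IsClosed (convexHull ℝ (Set.range p)) :=
    (Set.finite_range p).isClosed_convexHull (𝕜 := ℝ)
  classical
  obtain ⟨f, u, hft, hfu⟩ :=
    geometric_hahn_banach_point_closed (convex_convexHull ℝ _) hclosed ht
  -- f t < u and ∀ b ∈ hull, u < f b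
  obtain ⟨v, hv⟩ : ∃ v : V, ∀ x, f x = ⟪v, x⟫ :=
    ⟨(InnerProductSpace.toDual ℝ V).symm f,
      fun x => (InnerProductSpace.toDual_symm_apply).symm⟩
  refine ⟨fun i => if i = ℓp then v else 0, fun i => if i = ℓp then -u else 0, ?_, ?_⟩
  · intro j i hi
    simp only [if_pos rfl, if_neg hi, inner_zero_left, eq_self_iff_true, if_true]
    have : u < f (p j) := hfu _ (subset_convexHull ℝ _ (Set.mem_range_self j))
    rw [hv] at this
    linarith
  · intro hcontra
    obtain ⟨i, hi⟩ := Fintype.exists_ne_of_one_lt_card (by omega) ℓp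
    have := hcontra i hi
    rw [hv] at hft
    simp only [if_pos rfl, if_neg hi, inner_zero_left, eq_self_iff_true, if_true] at this
    linarith
end

section
/- Let V be a finite-dimensional real inner product space, let L be a finite set of labels, let (w, b) be a linear classifier over L, fix a label ℓ ∈ L, let ρ > 0, and let p_1, ..., p_k ∈ V be points that are classified into ℓ with margin ρ, i.e., for every j and every i ≠ ℓ, ⟪w_ℓ − w_i, p_j⟫ + (b_ℓ − b_i) > ρ·‖w_ℓ − w_i‖. If t ∈ V satisfies ‖t − q‖ ≤ ρ for some point q in the convex hull of {p_1, ..., p_k}, then (w, b) classifies t into label ℓ. In particular, if the poisons are classified as expected and the residual of t to the convex polytope of the poisons is at most the margin ρ, the target t is classified into the poisons' class. -/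
open RealInnerProductSpace

/-- If the poisons `p 1, …, p k` are all classified into the label `ℓ` with margin `ρ`,
i.e. `⟪w ℓ - w i, p j⟫ + (b ℓ - b i) > ρ * ‖w ℓ - w i‖` for all `j` and all `i ≠ ℓ`,
and the target `t` is within distance `ρ` of some point `q` of the convex hull of the
poisons, then the classifier `(w, b)` classifies `t` into `ℓ`. -/
theorem classifies_target_of_residual_le_margin
    {V : Type*} [NormedAddCommGroup V] [InnerProductSpace ℝ V] [FiniteDimensional ℝ V]
    {L : Type*} [Fintype L] (w : L → V) (b : L → ℝ) (ℓ : L)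
    (ρ : ℝ) (hρ : 0 < ρ)
    {k : ℕ} (p : Fin k → V)
    (hmargin : ∀ j : Fin k, ∀ i : L, i ≠ ℓ →
      ⟪w ℓ - w i, p j⟫ + (b ℓ - b i) > ρ * ‖w ℓ - w i‖)
    (t q : V) (hq : q ∈ convexHull ℝ (Set.range p)) (htq : ‖t - q‖ ≤ ρ) :
    ∀ i : L, i ≠ ℓ → ⟪w ℓ, t⟫ + b ℓ > ⟪w i, t⟫ + b i := by
  intro i hi
  set v := w ℓ - w i with hv
  set c := b ℓ - b i with hc
  -- q is in the convex halfspace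
  have hconv : Convex ℝ {x : V | ρ * ‖v‖ - c < ⟪v, x⟫} :=
    convex_halfSpace_gt ⟨fun x y => inner_add_right v x y, fun r x => real_inner_smul_right v x r⟩ _
  have hqin : ρ * ‖v‖ - c < ⟪v, q⟫ := by
    have := convexHull_min (Set.range_subset_iff.2 fun j => by
      have := hmargin j i hi
      simp only [Set.mem_setOf_eq]
      linarith) hconv hq
    exact this
  have hcs : |⟪v, t - q⟫| ≤ ‖v‖ * ρ := by
    calc |⟪v, t - q⟫| ≤ ‖v‖ * ‖t - q‖ := abs_real_inner_le_norm v (t - q)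
      _ ≤ ‖v‖ * ρ := by
        exact mul_le_mul_of_nonneg_left htq (norm_nonneg v)
  have h1 : ⟪v, t⟫ = ⟪v, q⟫ + ⟪v, t - q⟫ := by
    rw [← inner_add_right]; congr 1; abel
  have h2 : ⟪v, t⟫ + c > 0 := by
    have := abs_le.1 hcs
    rw [h1]
    nlinarith [this.1]
  have h3 : ⟪v, t⟫ = ⟪w ℓ, t⟫ - ⟪w i, t⟫ := by
    rw [hv, inner_sub_left]
  rw [h3, hc] at h2
  linarith
end
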